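/- arXiv:2512.08893 — 4 statements merged into one kernel-verified Lean document; each statement's English description precedes it below -/
import Mathlib

section
/- Let ℰ and 𝒟 be encoding and decoding superoperators with 𝒟 ∘ ℰ = id, and let ℛ be a recovery superoperator with Image(ℛ) = Image(ℰ). If every gate G in a set 𝓕 has the form G = ℛ ∘ G̃ for some linear map G̃ on B(H^n), then for all G_a, G_b ∈ 𝓕, the gadget retraction satisfies Ω[G_a ∘ G_b] = Ω[G_a] ∘ Ω[G_b]. -/
/-- Let `E` (encoding) and `D` (decoding) be superoperators with `D ∘ E = id`,
and `R` a recovery superoperator with `range R = range E`.  If every gate `G`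
in a set `F` has the form `G = R ∘ G̃`, then the gadget retraction
`Ω[G] = D ∘ G ∘ E` satisfies `Ω[Ga ∘ Gb] = Ω[Ga] ∘ Ω[Gb]` for all
`Ga, Gb ∈ F`. -/
theorem stmt9 {k n : ℕ}
    (Emap : Matrix (Fin (2^k)) (Fin (2^k)) ℂ →ₗ[ℂ] Matrix (Fin (2^n)) (Fin (2^n)) ℂ)
    (Dmap : Matrix (Fin (2^n)) (Fin (2^n)) ℂ →ₗ[ℂ] Matrix (Fin (2^k)) (Fin (2^k)) ℂ)
    (hDE : Dmap ∘ₗ Emap = LinearMap.id)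
    (Rmap : Matrix (Fin (2^n)) (Fin (2^n)) ℂ →ₗ[ℂ] Matrix (Fin (2^n)) (Fin (2^n)) ℂ)
    (hR : LinearMap.range Rmap = LinearMap.range Emap)
    (F : Set (Matrix (Fin (2^n)) (Fin (2^n)) ℂ →ₗ[ℂ] Matrix (Fin (2^n)) (Fin (2^n)) ℂ))
    (hF : ∀ G ∈ F, ∃ Gt, G = Rmap ∘ₗ Gt) :
    ∀ Ga ∈ F, ∀ Gb ∈ F,
      Dmap ∘ₗ (Ga ∘ₗ Gb) ∘ₗ Emap =
        (Dmap ∘ₗ Ga ∘ₗ Emap) ∘ₗ (Dmap ∘ₗ Gb ∘ₗ Emap) := by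
  intro Ga hGa Gb hGb
  ext x
  obtain ⟨Gt, rfl⟩ := hF Gb hGb
  have hmem : (Rmap ∘ₗ Gt) (Emap x) ∈ LinearMap.range Emap := by
    rw [← hR]; exact ⟨Gt (Emap x), rfl⟩
  obtain ⟨z, hz⟩ := hmem
  simp only [LinearMap.comp_apply]
  simp only [LinearMap.comp_apply] at hz
  rw [← hz]
  have : Dmap (Emap z) = z := congrArg (· z) hDE
  rw [this]
end

section
/- In the 3-qubit repetition code (stabilizers ZZI, IZZ, codewords |000⟩, |111⟩, corrections R(0,0)=III, R(1,0)=XII, R(0,1)=IIX, R(1,1)=IXI), the noisy recovery map ℛ̃ with independent ancilla bit-flip probability p ∈ (0,1) satisfies: Ω[ℛ̃] = id on single-qubit operators, but Ω[ℛ̃∘ℛ̃](Z) = (1 - 2ε) Z for some ε > 0; hence Ω[ℛ̃∘ℛ̃] ≠ Ω[ℛ̃]∘Ω[ℛ̃]. -/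
open Matrix

namespace Stmt16

noncomputable section

/-- Computational basis index for three qubits. -/
abbrev V := Fin 3 → Fin 2

/-- Encoding isometry of the 3-qubit repetition code: `|0⟩ ↦ |000⟩`,
`|1⟩ ↦ |111⟩`. -/
def Emat : Matrix V (Fin 2) ℂ :=
  Matrix.of fun v i => if v = fun _ => i then 1 else 0

/-- Sign `(-1)^b` of a bit. -/
def sgn (b : Fin 2) : ℂ := if b = 0 then 1 else -1

/-- The stabilizer `Z_i Z_j` (e.g. `ZZI` for `i = 0, j = 1`). -/
def ZZ (i j : Fin 3) : Matrix V V ℂ :=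
  Matrix.diagonal fun v => sgn (v i) * sgn (v j)

/-- Bit flip `X` on qubit `i`. -/
def Xop (i : Fin 3) : Matrix V V ℂ :=
  Matrix.of fun v w => if v = Function.update w i (w i + 1) then 1 else 0

/-- Syndromes are pairs of bits (eigenvalue bits of `ZZI` and `IZZ`). -/
abbrev Syn := Fin 2 × Fin 2

/-- The corrections: `R(0,0)=III`, `R(1,0)=XII`, `R(0,1)=IIX`, `R(1,1)=IXI`. -/
def corr (s : Syn) : Matrix V V ℂ :=
  if s = (0, 0) then 1
  else if s = (1, 0) then Xop 0
  else if s = (0, 1) then Xop 2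
  else Xop 1

/-- The syndrome projector for syndrome `s`. -/
def proj (s : Syn) : Matrix V V ℂ :=
  ((2 : ℂ)⁻¹ • (1 + sgn s.1 • ZZ 0 1)) * ((2 : ℂ)⁻¹ • (1 + sgn s.2 • ZZ 1 2))

/-- Hamming distance between two 2-bit syndromes. -/
def ham (s s' : Syn) : ℕ :=
  (if s.1 = s'.1 then 0 else 1) + (if s.2 = s'.2 then 0 else 1)

/-- Syndrome confusion probabilities from independent ancilla bit flips with
probability `p`: `χ_{s,s'} = (1-p)^(2-h(s,s')) p^(h(s,s'))`. -/
def chi (p : ℝ) (s s' : Syn) : ℝ := (1 - p)^(2 - ham s s') * p^(ham s s')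

/-- The noisy recovery map `ℛ̃`. -/
def noisyR (p : ℝ) (ρ : Matrix V V ℂ) : Matrix V V ℂ :=
  ∑ s : Syn, ∑ s' : Syn, ((chi p s s' : ℝ) : ℂ) •
    (corr s' * proj s * ρ * proj s * (corr s')ᴴ)

/-- The ideal recovery map `ℛ` (the `p = 0` case). -/
def idealR (ρ : Matrix V V ℂ) : Matrix V V ℂ :=
  ∑ s : Syn, corr s * proj s * ρ * proj s * (corr s)ᴴ

/-- The gadget retraction `Ω[Λ] = ℰ† ∘ ℛ ∘ Λ ∘ ℰ`. -/
def retr (Λ : Matrix V V ℂ → Matrix V V ℂ)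
    (ρ : Matrix (Fin 2) (Fin 2) ℂ) : Matrix (Fin 2) (Fin 2) ℂ :=
  Ematᴴ * idealR (Λ (Emat * ρ * Ematᴴ)) * Emat

/-- The single-qubit Pauli `Z`. -/
def Zmat : Matrix (Fin 2) (Fin 2) ℂ := !![1, 0; 0, -1]

-- auxiliary defs
def c2 (i : Fin 2) : V := fun _ => i
def flip (k : Fin 3) (v : V) : V := Function.update v k (v k + 1)
def PM (F : V → V) : Matrix V V ℂ := Matrix.of fun v w => if w = F v then 1 else 0
def synd (v : V) : Syn := (v 0 + v 1, v 1 + v 2)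
def indf (s : Syn) : V → ℂ := fun v => if synd v = s then 1 else 0
lemma zero_syn : ((0,0) : Syn) = 0 := rfl

def cf (s : Syn) : V → V :=
  if s = (0,0) then id else if s = (1,0) then flip 0 else if s = (0,1) then flip 2 else flip 1

lemma fin2cases (a : Fin 2) : a = 0 ∨ a = 1 := by omega
lemma syncases (s : Syn) : s = (0,0) ∨ s = (1,0) ∨ s = (0,1) ∨ s = (1,1) := by
  rcases s with ⟨a, b⟩
  rcases fin2cases a with h|h <;> rcases fin2cases b with h'|h' <;> subst h <;> subst h' <;> simp

lemma flip_apply (k : Fin 3) (v : V) (j : Fin 3) :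
    flip k v j = if j = k then v k + 1 else v j := by
  simp [flip, Function.update_apply]

lemma flip_flip (k : Fin 3) (v : V) : flip k (flip k v) = v := by
  funext j
  rcases eq_or_ne j k with h|h
  · subst h; simp [flip_apply]; omega
  · simp [flip_apply, h]

lemma cf_invol (s : Syn) (v : V) : cf s (cf s v) = v := by
  unfold cf; split_ifs <;> simp [flip_flip]

lemma PM_mul_PM (F G : V → V) : PM F * PM G = PM (fun v => G (F v)) := by
  ext v w
  simp only [PM, Matrix.mul_apply, Matrix.of_apply]
  rw [Finset.sum_eq_single (F v)]
  · simp
  · intro b _ hb; simp [hb]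
  · simp

lemma PM_id : PM (fun v => v) = 1 := by
  ext v w; simp [PM, Matrix.one_apply, eq_comm]

lemma Xop_eq (k : Fin 3) : Xop k = PM (flip k) := by
  ext v w
  simp only [Xop, PM, Matrix.of_apply]
  congr 1
  apply propext
  constructor
  · intro h; rw [show Function.update w k (w k + 1) = flip k w from rfl] at h
    rw [h, flip_flip]
  · intro h; rw [h]; exact (flip_flip k v).symm

lemma corr_eq (s : Syn) : corr s = PM (cf s) := by
  unfold corr cf
  split_ifs <;> first
    | (rw [Xop_eq])
    | (rw [← PM_id]; rfl)

lemma fac_diag (a : Fin 2) (i j : Fin 3) :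
    (2 : ℂ)⁻¹ • (1 + sgn a • ZZ i j) =
      Matrix.diagonal (fun v => 2⁻¹ * (1 + sgn a * (sgn (v i) * sgn (v j)))) := by
  ext v w
  by_cases h : v = w <;>
    simp [ZZ, Matrix.diagonal_apply, Matrix.one_apply, h, Matrix.smul_apply, Matrix.add_apply]

lemma proj_diag (s : Syn) : proj s = Matrix.diagonal (indf s) := by
  unfold proj
  rw [fac_diag, fac_diag, Matrix.diagonal_mul_diagonal]
  refine congrArg _ (funext fun v => ?_)
  simp only [indf, synd, Pi.mul_apply]
  rcases syncases s with h|h|h|h <;> subst h <;>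
  rcases fin2cases (v 0) with h0|h0 <;> rcases fin2cases (v 1) with h1|h1 <;>
  rcases fin2cases (v 2) with h2|h2 <;>
  simp [sgn, h0, h1, h2, Prod.ext_iff] <;> norm_num

lemma synd_c2 (i : Fin 2) : synd (c2 i) = (0, 0) := by
  simp only [synd, c2, Prod.ext_iff]; omega

lemma indf_c2 (s : Syn) (i : Fin 2) : indf s (c2 i) = if s = (0,0) then 1 else 0 := by
  simp [indf, synd_c2, eq_comm]

lemma Emat_apply (v : V) (i : Fin 2) : Emat v i = if v = c2 i then 1 else 0 := rfl

lemma EhE : Ematᴴ * Emat = 1 := by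
  ext i j
  simp only [Matrix.mul_apply, Matrix.conjTranspose_apply, Emat_apply, Matrix.one_apply]
  rw [Finset.sum_eq_single (c2 i)]
  · have hc : (c2 i = c2 j) ↔ (i = j) := by
      constructor
      · intro h; simpa [c2] using congrFun h 0
      · intro h; rw [h]
    simp [hc]
  · intro b _ hb; simp [hb]
  · simp

lemma diag_E (d : V → ℂ) :
    Matrix.diagonal d * Emat = Emat * Matrix.diagonal (fun i => d (c2 i)) := by
  ext v i
  simp only [Matrix.diagonal_mul, Matrix.mul_diagonal, Emat_apply]
  rcases eq_or_ne v (c2 i) with h|h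
  · subst h; simp
  · simp [h]

lemma E_diag (d : V → ℂ) (hd : ∀ v, (starRingEnd ℂ) (d v) = d v) :
    Ematᴴ * Matrix.diagonal d = Matrix.diagonal (fun i => d (c2 i)) * Ematᴴ := by
  ext i w
  simp only [Matrix.diagonal_mul, Matrix.mul_diagonal, Matrix.conjTranspose_apply, Emat_apply]
  rcases eq_or_ne w (c2 i) with h|h
  · subst h; simp [hd]
  · simp [h]

lemma indf_conj (s : Syn) (v : V) : (starRingEnd ℂ) (indf s v) = indf s v := by
  simp only [indf]; split_ifs <;> simp

-- if-condition helpers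
lemma diag2_indf (s : Syn) :
    Matrix.diagonal (fun i : Fin 2 => indf s (c2 i)) = if s = (0,0) then (1 : Matrix (Fin 2) (Fin 2) ℂ) else 0 := by
  split_ifs with h
  · subst h; ext i j
    by_cases hij : i = j <;> simp [Matrix.diagonal_apply, indf_c2, hij, Matrix.one_apply]
  · have h' : ¬ s = 0 := by simpa [zero_syn] using h
    ext i j
    by_cases hij : i = j <;> simp [Matrix.diagonal_apply, indf_c2, hij, h', h]

lemma projE : ∀ s : Syn, proj s * Emat = if s = (0,0) then Emat else 0 := by
  intro s
  rw [proj_diag, diag_E, diag2_indf]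
  split_ifs <;> simp

lemma Eproj : ∀ s : Syn, Ematᴴ * proj s = if s = (0,0) then Ematᴴ else 0 := by
  intro s
  rw [proj_diag, E_diag _ (indf_conj s), diag2_indf]
  split_ifs <;> simp

lemma synd_flip (k : Fin 3) (v : V) :
    synd (flip k v) = synd v + (if k = 0 then (1,0) else if k = 1 then (1,1) else (0,1)) := by
  fin_cases k <;>
    simp [synd, flip_apply, Prod.ext_iff] <;>
    (try constructor) <;> (try abel) <;> trivial

lemma cf00 : cf (0,0) = id := by unfold cf; rw [if_pos rfl]
lemma cf10 : cf (1,0) = flip 0 := by unfold cf; rw [if_neg (by decide), if_pos rfl]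
lemma cf01 : cf (0,1) = flip 2 := by
  unfold cf; rw [if_neg (by decide), if_neg (by decide), if_pos rfl]
lemma cf11 : cf (1,1) = flip 1 := by
  unfold cf; rw [if_neg (by decide), if_neg (by decide), if_neg (by decide)]

lemma synd_cf (s : Syn) (v : V) : synd (cf s v) = synd v + s := by
  rcases syncases s with h|h|h|h <;> subst h
  · rw [cf00]; simp [zero_syn]
  · rw [cf10, synd_flip]; norm_num
  · rw [cf01, synd_flip]; rw [if_neg (by decide), if_neg (by decide)]
  · rw [cf11, synd_flip]; norm_num

lemma syn_addcancel : ∀ a s t : Syn, (a + s = t ↔ a = t + s) := by decide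

lemma indf_comp_cf (t s : Syn) (v : V) : indf t (cf s v) = indf (t + s) v := by
  simp only [indf, synd_cf]
  by_cases h : synd v + s = t
  · rw [if_pos h, if_pos ((syn_addcancel _ _ _).mp h)]
  · rw [if_neg h, if_neg (fun hh => h ((syn_addcancel _ _ _).mpr hh))]

lemma PM_diag (F : V → V) (d : V → ℂ) :
    PM F * Matrix.diagonal d = Matrix.diagonal (fun v => d (F v)) * PM F := by
  ext v w
  simp only [Matrix.mul_diagonal, Matrix.diagonal_mul, PM, Matrix.of_apply]
  by_cases h : w = F v
  · subst h; simp
  · simp [h]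

lemma PMproj (s t : Syn) : PM (cf s) * proj t = proj (t + s) * PM (cf s) := by
  rw [proj_diag, proj_diag, PM_diag]
  refine congrArg (· * PM (cf s)) ?_
  exact congrArg _ (funext fun v => indf_comp_cf t s v)

lemma PMprojX {n : Type*} (s t : Syn) (X : Matrix V n ℂ) :
    PM (cf s) * (proj t * X) = proj (t + s) * (PM (cf s) * X) := by
  rw [← Matrix.mul_assoc, PMproj, Matrix.mul_assoc]

lemma EprojX {n : Type*} (s : Syn) (X : Matrix V n ℂ) :
    Ematᴴ * (proj s * X) = if s = (0,0) then Ematᴴ * X else 0 := by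
  rw [← Matrix.mul_assoc, Eproj]
  split_ifs <;> simp

lemma projEX {n : Type*} (s : Syn) (X : Matrix (Fin 2) n ℂ) :
    proj s * (Emat * X) = if s = (0,0) then Emat * X else 0 := by
  rw [← Matrix.mul_assoc, projE]
  split_ifs <;> simp

lemma PM_mul_PM_X {n : Type*} (F G : V → V) (X : Matrix V n ℂ) :
    PM F * (PM G * X) = PM (fun v => G (F v)) * X := by
  rw [← Matrix.mul_assoc, PM_mul_PM]

def Q (K : V → V) : Matrix (Fin 2) (Fin 2) ℂ :=
  Matrix.of fun i j => if K (c2 i) = c2 j then 1 else 0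

lemma EPME (K : V → V) : Ematᴴ * (PM K * Emat) = Q K := by
  ext i j
  rw [← Matrix.mul_assoc]
  simp only [Matrix.mul_apply, Matrix.conjTranspose_apply, Emat_apply, PM, Matrix.of_apply, Q,
    Finset.sum_mul]
  rw [Finset.sum_comm]
  rw [Finset.sum_eq_single (c2 i)]
  · simp only [if_pos rfl, star_one, one_mul]
    rw [Finset.sum_eq_single (K (c2 i))]
    · simp
    · intro b _ hb; simp [hb]
    · simp
  · intro b _ hb
    rw [Finset.sum_eq_single (K b)]
    · simp [hb]
    · intro u _ hu; simp [hu]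
    · simp
  · simp

lemma EPMEX {n : Type*} (K : V → V) (X : Matrix (Fin 2) n ℂ) :
    Ematᴴ * (PM K * (Emat * X)) = Q K * X := by
  rw [← Matrix.mul_assoc, ← Matrix.mul_assoc, Matrix.mul_assoc Ematᴴ, EPME]

lemma Q_id : Q (fun v => v) = 1 := by
  ext i j
  by_cases h : i = j
  · subst h; simp [Q, Matrix.one_apply]
  · simp [Q, Matrix.one_apply, h, show ¬ (c2 i = c2 j) from fun hh => h (congrFun hh 0)]


lemma PM_herm (F : V → V) (hF : ∀ v, F (F v) = v) : (PM F)ᴴ = PM F := by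
  ext v w
  simp only [Matrix.conjTranspose_apply, PM, Matrix.of_apply]
  have h : (v = F w) ↔ (w = F v) := ⟨fun h => by rw [h, hF], fun h => by rw [h, hF]⟩
  split_ifs with h1 h2 h2
  · simp
  · exact absurd (h.mp h1) h2
  · exact absurd (h.mpr h2) h1
  · simp

lemma PM_cf_herm (s : Syn) : (PM (cf s))ᴴ = PM (cf s) := PM_herm _ (cf_invol s)

lemma syn_ss : ∀ t s : Syn, (t + s) + s = t := by decide

lemma projPM' (t s : Syn) : proj t * PM (cf s) = PM (cf s) * proj (t + s) := by
  have h := PMproj s (t + s)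
  rw [syn_ss] at h
  exact h.symm

lemma projPMX {n : Type*} (t s : Syn) (X : Matrix V n ℂ) :
    proj t * (PM (cf s) * X) = PM (cf s) * (proj (t + s) * X) := by
  rw [← Matrix.mul_assoc, projPM', Matrix.mul_assoc]

lemma syn_shift1 : ∀ u a : Syn, u + a = 0 ↔ u = a := by decide
lemma syn_shift2 : ∀ u a b : Syn, (u + a) + b = 0 ↔ u = a + b := by decide
lemma syn_shift3 : ∀ u a b c : Syn, ((u + a) + b) + c = 0 ↔ u = (a + b) + c := by decide
lemma synuu : ∀ u : Syn, u + u = 0 := by decide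

lemma hmul_ite {l m n : Type*} [Fintype m] (c : Prop) [Decidable c]
    (A : Matrix l m ℂ) (B D : Matrix m n ℂ) :
    A * (if c then B else D) = if c then A * B else A * D := by
  split_ifs <;> rfl

lemma ite_hmul {l m n : Type*} [Fintype m] (c : Prop) [Decidable c]
    (A D : Matrix l m ℂ) (B : Matrix m n ℂ) :
    (if c then A else D) * B = if c then A * B else D * B := by
  split_ifs <;> rfl

lemma one_round (p : ℝ) (ρ : Matrix (Fin 2) (Fin 2) ℂ) :
    retr (noisyR p) ρ = ∑ s' : Syn, ((chi p (0,0) s' : ℝ) : ℂ) • ρ := by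
  unfold retr idealR noisyR
  simp only [corr_eq, PM_cf_herm, Matrix.mul_sum, Matrix.sum_mul, Matrix.mul_smul,
    Matrix.smul_mul, Matrix.mul_assoc, projPMX, projEX, projE,
    hmul_ite, ite_hmul, Matrix.mul_zero, Matrix.zero_mul, smul_ite, smul_zero, smul_smul,
    Finset.sum_ite_irrel, Finset.sum_const_zero, Finset.sum_ite_eq, Finset.sum_ite_eq',
    Finset.mem_univ, if_true, synuu, syn_shift1, syn_shift2, syn_shift3, zero_syn, zero_add,
    add_zero]
  simp only [PM_mul_PM_X, PM_mul_PM, EPMEX, EPME, cf_invol, Q_id, Matrix.one_mul,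
    Matrix.mul_one, Matrix.mul_assoc]

def Xbar : Matrix (Fin 2) (Fin 2) ℂ := !![0, 1; 1, 0]
def flipAll : V → V := fun v => flip 0 (flip 1 (flip 2 v))
def esgn (a b : Syn) : ℝ := if a = 0 ∨ b = 0 ∨ a = b then 1 else -1

lemma Kfacts : ∀ a b : Syn,
    (fun v => cf (a+b) (cf b (cf a v))) = (fun v => cf a (cf b (cf (a+b) v))) ∧
    ((a = 0 ∨ b = 0 ∨ a = b) → (fun v => cf a (cf b (cf (a+b) v))) = (fun v => v)) ∧
    (¬(a = 0 ∨ b = 0 ∨ a = b) → (fun v => cf a (cf b (cf (a+b) v))) = flipAll) := by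
  decide

lemma sum_rot {M : Type*} [AddCommMonoid M] (f : Syn → Syn → Syn → M) :
    (∑ x : Syn, ∑ y : Syn, ∑ z : Syn, f x y z)
      = ∑ y : Syn, ∑ z : Syn, ∑ x : Syn, f x y z := by
  rw [Finset.sum_comm]
  exact Finset.sum_congr rfl fun y _ => Finset.sum_comm

lemma Q_flipAll : Q flipAll = Xbar := by
  ext i j
  rw [show Q flipAll i j = Matrix.of (fun i j => if flipAll (c2 i) = c2 j then (1:ℂ) else 0) i j from rfl, Matrix.of_apply]
  fin_cases i <;> fin_cases j <;>
    first
      | (rw [if_pos (by decide)]; norm_num [Xbar])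
      | (rw [if_neg (by decide)]; norm_num [Xbar])

lemma XZX : Xbar * (Zmat * Xbar) = ((-1 : ℝ) : ℂ) • Zmat := by
  ext i j
  fin_cases i <;> fin_cases j <;>
    simp [Xbar, Zmat, Matrix.mul_apply, Fin.sum_univ_two]

lemma Qterm (a b : Syn) :
    Q (fun v => cf a (cf b (cf (a+b) v))) * (Zmat * Q (fun v => cf (a+b) (cf b (cf a v)))) =
      ((esgn a b : ℝ) : ℂ) • Zmat := by
  obtain ⟨h1, h2, h3⟩ := Kfacts a b
  rw [h1]
  by_cases h : a = 0 ∨ b = 0 ∨ a = b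
  · rw [h2 h, Q_id, esgn, if_pos h]
    simp
  · rw [h3 h, Q_flipAll, XZX, esgn, if_neg h]

lemma two_round (p : ℝ) :
    retr (fun x => noisyR p (noisyR p x)) Zmat
      = ∑ a : Syn, ∑ b : Syn, ((chi p a b * chi p 0 a * esgn a b : ℝ) : ℂ) • Zmat := by
  unfold retr idealR noisyR
  simp only [corr_eq, PM_cf_herm, Matrix.mul_sum, Matrix.sum_mul, Matrix.mul_smul,
    Matrix.smul_mul, Matrix.mul_assoc, projPMX, projEX, projE,
    hmul_ite, ite_hmul, Matrix.mul_zero, Matrix.zero_mul, smul_ite, smul_zero, smul_smul,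
    Finset.sum_ite_irrel, Finset.sum_const_zero, Finset.sum_ite_eq, Finset.sum_ite_eq',
    Finset.mem_univ, if_true, synuu, syn_shift1, syn_shift2, syn_shift3, zero_syn, zero_add,
    add_zero]
  simp only [PM_mul_PM_X, PM_mul_PM, EPMEX, EPME, cf_invol, Q_id, Matrix.one_mul,
    Matrix.mul_one, Matrix.mul_assoc]
  simp only [show ∀ u a b : Syn, (u + a = b) ↔ (u = b + a) from by decide]
  rw [sum_rot]
  simp only [Finset.sum_ite_eq', Finset.mem_univ, if_true, syn_ss, eq_self_iff_true]
  refine Finset.sum_congr rfl fun a _ => Finset.sum_congr rfl fun b _ => ?_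
  rw [Qterm, smul_smul]
  congr 1
  push_cast
  ring

lemma coeff_sum (p : ℝ) :
    (∑ a : Syn, ∑ b : Syn, ((chi p a b * chi p 0 a * esgn a b : ℝ) : ℂ) • Zmat)
      = ((1 - 2*(4*(1-p)*p^3 + 2*(1-p)^2*p^2) : ℝ) : ℂ) • Zmat := by
  simp only [← Finset.sum_smul]
  congr 1
  rw [show ((1 - 2*(4*(1-p)*p^3 + 2*(1-p)^2*p^2) : ℝ) : ℂ)
      = ((∑ a : Syn, ∑ b : Syn, (chi p a b * chi p 0 a * esgn a b : ℝ) : ℝ) : ℂ) from ?_]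
  · push_cast; ring_nf
  · congr 1
    simp only [Fintype.sum_prod_type, Fin.sum_univ_two]
    simp (config := { decide := true }) only [chi, ham, esgn]
    norm_num
    ring


lemma chi_sum_one (p : ℝ) : (∑ s' : Syn, ((chi p (0,0) s' : ℝ) : ℂ)) = 1 := by
  rw [show (1 : ℂ) = ((1 : ℝ) : ℂ) from by norm_num]
  rw [show (∑ s' : Syn, ((chi p (0,0) s' : ℝ) : ℂ))
      = (((∑ s' : Syn, chi p (0,0) s' : ℝ)) : ℂ) from by push_cast; rfl]
  congr 1
  simp only [Fintype.sum_prod_type, Fin.sum_univ_two]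
  simp (config := { decide := true }) only [chi, ham]
  norm_num
  ring

lemma one_round_id (p : ℝ) (ρ : Matrix (Fin 2) (Fin 2) ℂ) : retr (noisyR p) ρ = ρ := by
  rw [one_round, ← Finset.sum_smul, chi_sum_one, one_smul]

/-- In the 3-qubit repetition code with ancilla bit-flip probability
`p ∈ (0,1)`, one round of noisy recovery retracts to the identity logical
channel, but two rounds shrink the logical `Z` polarization:
`Ω[ℛ̃∘ℛ̃](Z) = (1-2ε) Z` with `ε > 0`.  Hence
`Ω[ℛ̃∘ℛ̃] ≠ Ω[ℛ̃] ∘ Ω[ℛ̃]`: logical gate composability fails. -/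
theorem stmt16 (p : ℝ) (hp : 0 < p) (hp1 : p < 1) :
    (∀ ρ, retr (noisyR p) ρ = ρ) ∧
    (∃ ε : ℝ, 0 < ε ∧
      retr (fun x => noisyR p (noisyR p x)) Zmat = ((1 - 2*ε : ℝ) : ℂ) • Zmat) ∧
    retr (fun x => noisyR p (noisyR p x)) ≠
      fun ρ => retr (noisyR p) (retr (noisyR p) ρ) := by
  set ε : ℝ := 4*(1-p)*p^3 + 2*(1-p)^2*p^2 with hε
  have hq : 0 < 1 - p := by linarith
  have hεpos : 0 < ε := by rw [hε]; positivity
  have h2 : retr (fun x => noisyR p (noisyR p x)) Zmat = ((1 - 2*ε : ℝ) : ℂ) • Zmat := by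
    rw [two_round, coeff_sum]
  refine ⟨one_round_id p, ⟨ε, hεpos, h2⟩, ?_⟩
  intro h
  have h3 := congrFun h Zmat
  rw [h2, one_round_id, one_round_id] at h3
  have h4 := congrFun (congrFun h3 0) 0
  simp [Zmat] at h4
  have h5 : ε = 0 := by exact_mod_cast h4
  linarith

end

end Stmt16
end

section
/- If Q : A* → [0,1] is button-theoretically Markovian for a gate set 𝒢 over H^n whose states have the form ℰ(ρ_L), effects have the form 𝒟†(E_L), and whose gates are {G_i}, then Q is button-theoretically Markovian for the logical gate set 𝒢_L = ({ρ_L}, {Ω[G_i]}, {E_L}) over H^k if and only if the set {G_i} is logical gate composable for Ω (i.e., Ω[G_a ∘ G_b] = Ω[G_a] ∘ Ω[G_b] for all a, b, extended to arbitrary finite compositions). -/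
namespace Stmt18

/-- Apply a list of gates (given by their labels) from left to right. -/
def applyList {M : Type*} {ι : Type*} (G : ι → (M → M)) (l : List ι) (x : M) : M :=
  l.foldl (fun y i => G i y) x

lemma applyList_cons {M ι : Type*} (G : ι → (M → M)) (i : ι) (l : List ι) (x : M) :
    applyList G (i :: l) x = applyList G l (G i x) := rfl

lemma applyList_add {R M ι : Type*} [Semiring R] [AddCommMonoid M] [Module R M]
    (F : ι → (M →ₗ[R] M)) (l : List ι) (x y : M) :
    applyList (fun i => ⇑(F i)) l (x + y)
      = applyList (fun i => ⇑(F i)) l x + applyList (fun i => ⇑(F i)) l y := by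
  induction l generalizing x y with
  | nil => rfl
  | cons i l ih => rw [applyList_cons, map_add, ih]; rfl

lemma applyList_smul {R M ι : Type*} [Semiring R] [AddCommMonoid M] [Module R M]
    (F : ι → (M →ₗ[R] M)) (l : List ι) (c : R) (x : M) :
    applyList (fun i => ⇑(F i)) l (c • x) = c • applyList (fun i => ⇑(F i)) l x := by
  induction l generalizing x with
  | nil => rfl
  | cons i l ih => rw [applyList_cons, map_smul, ih]; rfl

lemma applyList_zero {R M ι : Type*} [Semiring R] [AddCommMonoid M] [Module R M]
    (F : ι → (M →ₗ[R] M)) (l : List ι) :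
    applyList (fun i => ⇑(F i)) l 0 = 0 := by
  induction l with
  | nil => rfl
  | cons i l ih => rw [applyList_cons, map_zero, ih]

lemma eq_of_forall_trace_mul {m : Type*} [Fintype m] [DecidableEq m] (A B : Matrix m m ℂ)
    (h : ∀ E : Matrix m m ℂ, (E * A).trace = (E * B).trace) : A = B := by
  ext a b
  have := h (Matrix.single b a 1)
  simpa [Matrix.trace, Matrix.diag, Matrix.mul_apply, Matrix.single, ite_and,
    Finset.sum_ite_eq, Finset.sum_ite_eq'] using this

/-- Suppose `Q : A* → [0,1]` is button-theoretically Markovian for a physical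
gate set over `H^n` whose state preparations are `ℰ(ρ_L α)`, whose effects are
`𝒟†(E_L e)` (so that the predicted probability of the circuit
`(α, β₁…β_i, e)` is `Tr(E_L e · 𝒟(G_{β_i} ∘ ⋯ ∘ G_{β₁}(ℰ(ρ_L α))))`), and
whose gates `G` are linear, with `𝒟 ∘ ℰ = id` and the logical states and
effects tomographically complete (spanning `B(H^k)`).  Then `Q` is
button-theoretically Markovian for the logical gate set
`({ρ_L}, {Ω[G_i] = 𝒟 ∘ G_i ∘ ℰ}, {E_L})` if and only if the gates are
logical gate composable for `Ω`, extended to arbitrary finite compositions: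
`Ω[G_{β_i} ∘ ⋯ ∘ G_{β₁}] = Ω[G_{β_i}] ∘ ⋯ ∘ Ω[G_{β₁}]` for every list. -/
theorem stmt18 {k n : ℕ} {ιs ιg ιe : Type*}
    (Emap : Matrix (Fin (2^k)) (Fin (2^k)) ℂ →ₗ[ℂ] Matrix (Fin (2^n)) (Fin (2^n)) ℂ)
    (Dmap : Matrix (Fin (2^n)) (Fin (2^n)) ℂ →ₗ[ℂ] Matrix (Fin (2^k)) (Fin (2^k)) ℂ)
    (hDE : ∀ x, Dmap (Emap x) = x)
    (ρL : ιs → Matrix (Fin (2^k)) (Fin (2^k)) ℂ)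
    (EL : ιe → Matrix (Fin (2^k)) (Fin (2^k)) ℂ)
    (G : ιg → (Matrix (Fin (2^n)) (Fin (2^n)) ℂ →ₗ[ℂ] Matrix (Fin (2^n)) (Fin (2^n)) ℂ))
    (hspanS : Submodule.span ℂ (Set.range ρL) = ⊤)
    (hspanE : Submodule.span ℂ (Set.range EL) = ⊤)
    (Q : ιs × List ιg × ιe → ℂ)
    -- Q is button-theoretically Markovian for the physical gate set 𝒢:
    (hQ : ∀ (α : ιs) (l : List ιg) (e : ιe),
      Q (α, l, e) =
        (EL e * Dmap (applyList (fun i => ⇑(G i)) l (Emap (ρL α)))).trace) :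
    -- Q is button-theoretically Markovian for the logical gate set 𝒢_L ...
    (∀ (α : ιs) (l : List ιg) (e : ιe),
      Q (α, l, e) =
        (EL e * applyList (fun i x => Dmap (G i (Emap x))) l (ρL α)).trace) ↔
    -- ... iff the gates are logical gate composable for Ω:
    (∀ (l : List ιg) (ρ : Matrix (Fin (2^k)) (Fin (2^k)) ℂ),
      Dmap (applyList (fun i => ⇑(G i)) l (Emap ρ)) =
        applyList (fun i x => Dmap (G i (Emap x))) l ρ) := by
  have hstep : (fun (i : ιg) (x : Matrix (Fin (2^k)) (Fin (2^k)) ℂ)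
      => Dmap (G i (Emap x))) = fun i => ⇑((Dmap.comp (G i)).comp Emap) := rfl
  constructor
  · intro h l
    have key : ∀ α : ιs,
        Dmap (applyList (fun i => ⇑(G i)) l (Emap (ρL α))) =
          applyList (fun i x => Dmap (G i (Emap x))) l (ρL α) := by
      intro α
      apply eq_of_forall_trace_mul
      intro E
      have hE : E ∈ Submodule.span ℂ (Set.range EL) := hspanE ▸ Submodule.mem_top
      induction hE using Submodule.span_induction with
      | mem x hx =>
        obtain ⟨e, rfl⟩ := hx
        rw [← hQ α l e, h α l e]
      | zero => simp
      | add x y _ _ hx hy => simp [Matrix.add_mul, hx, hy]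
      | smul c x _ hx => simp [Matrix.smul_mul, hx]
    intro ρ
    have hρ : ρ ∈ Submodule.span ℂ (Set.range ρL) := hspanS ▸ Submodule.mem_top
    induction hρ using Submodule.span_induction with
    | mem x hx => obtain ⟨α, rfl⟩ := hx; exact key α
    | zero =>
      rw [hstep, map_zero, applyList_zero G l, map_zero,
        applyList_zero (fun i => (Dmap.comp (G i)).comp Emap) l]
    | add x y _ _ hx hy =>
      rw [hstep] at hx hy ⊢
      rw [map_add, applyList_add G l, map_add, applyList_add, hx, hy]
    | smul c x _ hx =>
      rw [hstep] at hx ⊢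
      rw [map_smul, applyList_smul G l, map_smul, applyList_smul, hx]
  · intro h α l e
    rw [hQ α l e, h l]

end Stmt18
end

section
/- Under the encoding unitary U_E defined by U_E(|s⟩⊗|ψ⟩) = R(s)† E|ψ⟩, the partial trace over the syndrome factor of the conjugated state equals the decoding operation: Tr_Syn(U_E† ρ U_E) = E† ℛ(ρ) E for all operators ρ on H^n, where ℛ(ρ) = Σ_s R(s) Π_s ρ Π_s R(s)† and Π_s = R(s)† EE† R(s). -/
open Matrix

/-- Under the encoding unitary `U` defined by `U(|s⟩⊗|ψ⟩) = (R s)ᴴ E |ψ⟩`,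
the partial trace over the syndrome factor of the conjugated state equals the
decoding operation: `Tr_Syn(Uᴴ ρ U) = Eᴴ ℛ(ρ) E` for every operator `ρ` on
`H^n`, where `ℛ(ρ) = ∑ s, R s * Π s * ρ * Π s * (R s)ᴴ` and
`Π s = (R s)ᴴ (E Eᴴ) (R s)`. -/
theorem stmt19 {n k m : ℕ}
    (E : Matrix (Fin (2^n)) (Fin (2^k)) ℂ) (hE : Eᴴ * E = 1)
    (R : (Fin m → ZMod 2) → Matrix (Fin (2^n)) (Fin (2^n)) ℂ)
    (hRu : ∀ s, (R s)ᴴ * R s = 1 ∧ R s * (R s)ᴴ = 1)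
    (hOrth : ∀ s s', (E * Eᴴ) * ((R s)ᴴ * R s') * (E * Eᴴ) =
      if s = s' then E * Eᴴ else 0)
    (hComp : ∑ s, (R s)ᴴ * (E * Eᴴ) * R s = 1)
    (U : Matrix (Fin (2^n)) ((Fin m → ZMod 2) × Fin (2^k)) ℂ)
    (hU : ∀ (v : Fin (2^n)) (s : Fin m → ZMod 2) (j : Fin (2^k)),
      U v (s, j) = ((R s)ᴴ * E) v j) :
    ∀ ρ : Matrix (Fin (2^n)) (Fin (2^n)) ℂ,
      (Matrix.of fun i j : Fin (2^k) => ∑ s, (Uᴴ * ρ * U) (s, i) (s, j)) =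
        Eᴴ * (∑ s, R s * ((R s)ᴴ * (E * Eᴴ) * R s) * ρ *
          ((R s)ᴴ * (E * Eᴴ) * R s) * (R s)ᴴ) * E := by
  intro ρ
  have key : ∀ (s : Fin m → ZMod 2) (i j : Fin (2^k)),
      (Uᴴ * ρ * U) (s, i) (s, j) = (Eᴴ * R s * ρ * ((R s)ᴴ * E)) i j := by
    intro s i j
    have hUc : ∀ (v : Fin (2^n)), Uᴴ (s, i) v = (Eᴴ * R s) i v := by
      intro v
      rw [Matrix.conjTranspose_apply, hU]
      have h : (Eᴴ * R s) = ((R s)ᴴ * E)ᴴ := by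
        simp [Matrix.conjTranspose_mul]
      rw [h, Matrix.conjTranspose_apply]
    simp only [Matrix.mul_apply, hUc, hU]
  have hrhs : Eᴴ * (∑ s, R s * ((R s)ᴴ * (E * Eᴴ) * R s) * ρ *
      ((R s)ᴴ * (E * Eᴴ) * R s) * (R s)ᴴ) * E
      = ∑ s, Eᴴ * R s * ρ * ((R s)ᴴ * E) := by
    rw [Matrix.mul_sum, Matrix.sum_mul]
    refine Finset.sum_congr rfl fun s _ => ?_
    have h1 := (hRu s).1
    have h2 := (hRu s).2
    have e1 : Eᴴ * R s * (R s)ᴴ = Eᴴ := by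
      rw [Matrix.mul_assoc, h2, Matrix.mul_one]
    simp only [← Matrix.mul_assoc]
    rw [e1, hE, Matrix.one_mul, Matrix.mul_assoc _ (R s) (R s)ᴴ, h2, Matrix.mul_one,
      Matrix.mul_assoc _ Eᴴ E, hE, Matrix.mul_one]
  rw [hrhs]
  ext i j
  simp only [Matrix.of_apply, Finset.sum_apply, key, Matrix.sum_apply]
end
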